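/- Let h ∈ ℝ^m have independent coordinates where each h_j takes values in [0, l_j] with P(h_j = 0) = 1 − p_j and mean E[h_j] = p_j μ_j. Let W ∈ ℝ^{m×n}, a_{ij} = Wᵢᵀ Wⱼ − [i = j], x = Wᵀ h, and ĥᵢ = max(0, Wᵢᵀ x + bᵢ) with bᵢ = −Σⱼ a_{ij} p_j μ_j. Then for all δ ≥ 0, P((1/m)‖ĥ − h‖₁ ≤ δ) ≥ 1 − Σᵢ [exp(−2δ²/(Σⱼ a_{ij}² l_j²)) + exp(−2δ²/(Σⱼ a_{ij}² l_j²))] = 1 − 2 Σᵢ exp(−2δ²/(Σⱼ a_{ij}² l_j²)). -/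

import Mathlib

open MeasureTheory ProbabilityTheory
open Real


lemma hoeffding_core {p : ℝ} (hp0 : 0 ≤ p) (hp1 : p ≤ 1) (t : ℝ) :
    (1 - p) * exp (-p * t) + p * exp ((1 - p) * t) ≤ exp (t ^ 2 / 8) := by
  set f : ℝ → ℝ := fun s => (1 - p) * exp (-p * s) + p * exp ((1 - p) * s) with hf
  set f1 : ℝ → ℝ := fun s => p * (1 - p) * (exp ((1 - p) * s) - exp (-p * s)) with hf1
  set f2 : ℝ → ℝ := fun s =>
    p * (1 - p) * (p * exp (-p * s) + (1 - p) * exp ((1 - p) * s)) with hf2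
  have hfpos : ∀ s, 0 < f s := by
    intro s
    have hA := exp_pos (-p * s); have hB := exp_pos ((1 - p) * s)
    rcases eq_or_lt_of_le hp0 with hp | hp
    · simp only [hf, ← hp]; norm_num
    · have h1 : 0 < p * exp ((1 - p) * s) := mul_pos hp hB
      have h2 : 0 ≤ (1 - p) * exp (-p * s) :=
        mul_nonneg (by linarith) hA.le
      simp only [hf]; linarith
  have hdA : ∀ s : ℝ, HasDerivAt (fun s => exp (-p * s)) (exp (-p * s) * (-p)) s := by
    intro s
    have := ((hasDerivAt_id s).const_mul (-p)).exp
    simpa using this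
  have hdB : ∀ s : ℝ, HasDerivAt (fun s => exp ((1 - p) * s)) (exp ((1 - p) * s) * (1 - p)) s := by
    intro s
    have := ((hasDerivAt_id s).const_mul (1 - p)).exp
    simpa using this
  have hdf : ∀ s, HasDerivAt f (f1 s) s := by
    intro s
    have := ((hdA s).const_mul (1 - p)).add ((hdB s).const_mul p)
    refine this.congr_deriv ?_
    simp only [hf1]; ring
  have hdf1 : ∀ s, HasDerivAt f1 (f2 s) s := by
    intro s
    have := (((hdB s).sub (hdA s)).const_mul (p * (1 - p)))
    refine this.congr_deriv ?_
    simp only [hf2]; ring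
  set g : ℝ → ℝ := fun s => s ^ 2 / 8 - log (f s) with hg
  set g1 : ℝ → ℝ := fun s => s / 4 - f1 s / f s with hg1
  have hdg : ∀ s, HasDerivAt g (g1 s) s := by
    intro s
    have h1 : HasDerivAt (fun s : ℝ => s ^ 2 / 8) (s / 4) s := by
      have := (hasDerivAt_pow 2 s).div_const 8
      refine this.congr_deriv ?_; push_cast; ring
    have h2 := ((hdf s).log (hfpos s).ne')
    have := h1.sub h2
    exact this
  set g2 : ℝ → ℝ := fun s => 1 / 4 - (f2 s * f s - f1 s * f1 s) / (f s) ^ 2 with hg2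
  have hdg1 : ∀ s, HasDerivAt g1 (g2 s) s := by
    intro s
    have h1 : HasDerivAt (fun s : ℝ => s / 4) (1 / 4) s := (hasDerivAt_id s).div_const 4
    have h2 := (hdf1 s).div (hdf s) (hfpos s).ne'
    have := h1.sub h2
    exact this
  have hkey : ∀ s, f2 s * f s - f1 s * f1 s = p * (1 - p) * (exp (-p * s) * exp ((1 - p) * s)) := by
    intro s
    simp only [hf, hf1, hf2]; ring
  have hg2nonneg : ∀ s, 0 ≤ g2 s := by
    intro s
    have hA := exp_pos (-p * s); have hB := exp_pos ((1 - p) * s)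
    have hfp := hfpos s
    have hsq : (f2 s * f s - f1 s * f1 s) / (f s) ^ 2 ≤ 1 / 4 := by
      rw [div_le_iff₀ (by positivity)]
      rw [hkey s]
      have expand : (f s) ^ 2 = ((1 - p) * exp (-p * s) + p * exp ((1 - p) * s)) ^ 2 := by
        simp only [hf]
      nlinarith [sq_nonneg ((1 - p) * exp (-p * s) - p * exp ((1 - p) * s))]
    simp only [hg2]; linarith
  have hg1mono : Monotone g1 :=
    monotone_of_deriv_nonneg (fun s => (hdg1 s).differentiableAt) (by
      intro s; rw [(hdg1 s).deriv]; exact hg2nonneg s)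
  have hg10 : g1 0 = 0 := by simp [hg1, hf1]
  have hgnonneg : ∀ s, 0 ≤ g s := by
    have hg0 : g 0 = 0 := by simp [hg, hf]
    intro s
    rcases le_total 0 s with hs | hs
    · have hmono : MonotoneOn g (Set.Ici (0:ℝ)) := by
        apply monotoneOn_of_deriv_nonneg (convex_Ici 0)
          (fun x _ => (hdg x).differentiableAt.continuousAt.continuousWithinAt)
          (fun x _ => (hdg x).differentiableAt.differentiableWithinAt)
        intro x hx
        rw [(hdg x).deriv]
        rw [← hg10]
        exact hg1mono (le_of_lt (by simpa using hx))
      have := hmono (Set.self_mem_Ici) (by exact hs) hs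
      linarith [hg0 ▸ this]
    · have hanti : AntitoneOn g (Set.Iic (0:ℝ)) := by
        apply antitoneOn_of_deriv_nonpos (convex_Iic 0)
          (fun x _ => (hdg x).differentiableAt.continuousAt.continuousWithinAt)
          (fun x _ => (hdg x).differentiableAt.differentiableWithinAt)
        intro x hx
        rw [(hdg x).deriv]
        rw [← hg10]
        exact hg1mono (le_of_lt (by simpa using hx))
      have := hanti (by exact hs) Set.self_mem_Iic hs
      linarith [hg0 ▸ this]
  have := hgnonneg t
  simp only [hg] at this
  have hlog : log (f t) ≤ t ^ 2 / 8 := by linarith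
  calc f t = exp (log (f t)) := (exp_log (hfpos t)).symm
    _ ≤ exp (t ^ 2 / 8) := exp_le_exp.2 hlog

lemma integrable_of_bddd {Ω : Type*} [MeasurableSpace Ω] {μ : Measure Ω} [IsFiniteMeasure μ]
    {X : Ω → ℝ} (hX : AEStronglyMeasurable X μ) {C : ℝ} (hC : ∀ ω, |X ω| ≤ C) :
    Integrable X μ :=
  Integrable.mono' (integrable_const C) hX (ae_of_all _ (by simpa using hC))

lemma hoeffding_lemma {Ω : Type*} [MeasurableSpace Ω] (μ : Measure Ω) [IsProbabilityMeasure μ]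
    {X : Ω → ℝ} (hX : Measurable X) {a b : ℝ} (hab : ∀ ω, X ω ∈ Set.Icc a b)
    (hmean : ∫ ω, X ω ∂μ = 0) (t : ℝ) :
    mgf X μ t ≤ exp (t ^ 2 * (b - a) ^ 2 / 8) := by
  have hΩ : Nonempty Ω := by
    by_contra hne
    simp only [not_nonempty_iff] at hne
    have : (μ Set.univ) = 0 := by simp [Set.univ_eq_empty_iff.2 hne]
    simp [measure_univ] at this
  obtain ⟨ω0⟩ := hΩ
  have hXint : Integrable X μ :=
    integrable_of_bddd hX.aestronglyMeasurable (C := |a| + |b|) (fun ω => by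
      have := hab ω; rw [Set.mem_Icc] at this
      rcases abs_cases (X ω) with ⟨h1, _⟩ | ⟨h1, _⟩ <;> cases abs_cases a <;> cases abs_cases b <;> linarith)
  have hale : a ≤ 0 := by
    have : ∫ ω, X ω ∂μ ≥ ∫ _, a ∂μ :=
      integral_mono (integrable_const a) hXint (fun ω => (hab ω).1)
    simpa [hmean] using this
  have hble : 0 ≤ b := by
    have : ∫ ω, X ω ∂μ ≤ ∫ _, b ∂μ :=
      integral_mono hXint (integrable_const b) (fun ω => (hab ω).2)
    simpa [hmean] using this
  rcases eq_or_lt_of_le (hale.trans hble) with hab0 | habl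
  · -- a = b, hence a = 0 = b and X = 0
    have ha0 : a = 0 := le_antisymm hale (by rw [hab0]; exact hble)
    have hb0 : b = 0 := by rw [← hab0, ha0]
    have hX0 : ∀ ω, X ω = 0 := fun ω => le_antisymm (hb0 ▸ (hab ω).2) (ha0 ▸ (hab ω).1)
    simp only [mgf]
    simp [hX0, ha0, hb0]
  · -- a < b
    have hba : 0 < b - a := by linarith
    set p : ℝ := -a / (b - a) with hpdef
    have hp0 : 0 ≤ p := div_nonneg (by linarith) hba.le
    have hp1 : p ≤ 1 := by
      rw [div_le_one hba]; linarith
    -- pointwise convexity bound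
    have hpt : ∀ ω, exp (t * X ω) ≤
        (b - X ω) / (b - a) * exp (t * a) + (X ω - a) / (b - a) * exp (t * b) := by
      intro ω
      have hx := hab ω; rw [Set.mem_Icc] at hx
      have hl1 : 0 ≤ (b - X ω) / (b - a) := div_nonneg (by linarith) hba.le
      have hl2 : 0 ≤ (X ω - a) / (b - a) := div_nonneg (by linarith) hba.le
      have hl3 : (b - X ω) / (b - a) + (X ω - a) / (b - a) = 1 := by
        field_simp
        ring
      have := convexOn_exp.2 (Set.mem_univ (t * a)) (Set.mem_univ (t * b)) hl1 hl2 hl3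
      have harg : ((b - X ω) / (b - a)) * (t * a) + ((X ω - a) / (b - a)) * (t * b) = t * X ω := by
        field_simp; ring
      simp only [smul_eq_mul] at this
      rw [harg] at this
      exact this
    -- integrate
    have hee : Integrable (fun ω => exp (t * X ω)) μ := by
      refine integrable_of_bddd (hX.const_mul t).exp.aestronglyMeasurable
        (C := exp (|t| * (|a| + |b|))) (fun ω => ?_)
      rw [abs_of_pos (exp_pos _), exp_le_exp]
      have := hab ω; rw [Set.mem_Icc] at this
      calc t * X ω ≤ |t * X ω| := le_abs_self _
        _ = |t| * |X ω| := abs_mul _ _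
        _ ≤ |t| * (|a| + |b|) := by
            apply mul_le_mul_of_nonneg_left _ (abs_nonneg t)
            rcases abs_cases (X ω) with ⟨h1, _⟩ | ⟨h1, _⟩ <;> cases abs_cases a <;>
              cases abs_cases b <;> linarith
    have hRHSint : Integrable (fun ω =>
        (b - X ω) / (b - a) * exp (t * a) + (X ω - a) / (b - a) * exp (t * b)) μ := by
      apply Integrable.add
      · exact ((((integrable_const b).sub hXint).div_const (b - a)).mul_const _)
      · exact (((hXint.sub (integrable_const a)).div_const (b - a)).mul_const _)
    have hint_le : mgf X μ t ≤
        ∫ ω, ((b - X ω) / (b - a) * exp (t * a) + (X ω - a) / (b - a) * exp (t * b)) ∂μ := by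
      exact integral_mono hee hRHSint hpt
    have hval : ∫ ω, ((b - X ω) / (b - a) * exp (t * a) + (X ω - a) / (b - a) * exp (t * b)) ∂μ
        = (1 - p) * exp (-p * (t * (b - a))) + p * exp ((1 - p) * (t * (b - a))) := by
      have e1 : -p * (t * (b - a)) = t * a := by
        rw [hpdef]; field_simp
      have e2 : (1 - p) * (t * (b - a)) = t * b := by
        rw [hpdef]; field_simp; ring
      rw [e1, e2]
      have : ∀ ω, (b - X ω) / (b - a) * exp (t * a) + (X ω - a) / (b - a) * exp (t * b)
          = (exp (t * a) * (b / (b-a)) + exp (t * b) * (-a / (b-a)))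
            + X ω * (exp (t * b) / (b - a) - exp (t * a) / (b - a)) := by
        intro ω; field_simp; ring
      simp_rw [this]
      rw [integral_add (integrable_const _) (hXint.mul_const _), integral_const,
        MeasureTheory.integral_mul_const, hmean, probReal_univ]
      simp only [ENNReal.toReal_one, one_smul, zero_mul, add_zero]
      rw [hpdef]
      field_simp
      ring
    have hcore := hoeffding_core hp0 hp1 (t * (b - a))
    have : mgf X μ t ≤ exp ((t * (b - a)) ^ 2 / 8) := by
      rw [hval] at hint_le; linarith
    convert this using 2
    ring

lemma hoeffding_tail {Ω : Type*} [MeasurableSpace Ω] (μ : Measure Ω) [IsProbabilityMeasure μ]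
    {m : ℕ} {Y : Fin m → Ω → ℝ} (hmeas : ∀ j, Measurable (Y j))
    (hindep : iIndepFun Y μ)
    {u v : Fin m → ℝ} (hbound : ∀ j ω, Y j ω ∈ Set.Icc (u j) (v j))
    (hmean : ∀ j, ∫ ω, Y j ω ∂μ = 0) {δ : ℝ} (hδ : 0 ≤ δ) :
    (μ {ω | δ ≤ ∑ j, Y j ω}).toReal ≤ exp (-2 * δ ^ 2 / ∑ j, (v j - u j) ^ 2) := by
  set S : ℝ := ∑ j, (v j - u j) ^ 2 with hS
  have hS0 : 0 ≤ S := Finset.sum_nonneg fun j _ => sq_nonneg _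
  have htriv : (μ {ω | δ ≤ ∑ j, Y j ω}).toReal ≤ 1 := by
    rw [← ENNReal.toReal_one]
    refine ENNReal.toReal_mono (by simp) ?_
    simpa using prob_le_one
  rcases eq_or_lt_of_le hS0 with hSz | hSpos
  · rw [← hSz]; simpa using htriv
  rcases eq_or_lt_of_le hδ with hδz | hδpos
  · rw [← hδz] at htriv ⊢; simpa using htriv
  set t : ℝ := 4 * δ / S with ht
  have htpos : 0 < t := by positivity
  -- integrability of each exp (t * Y j)
  have hint : ∀ j, Integrable (fun ω => exp (t * Y j ω)) μ := by
    intro j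
    refine integrable_of_bddd ((hmeas j).const_mul t).exp.aestronglyMeasurable
      (C := exp (|t| * (|u j| + |v j|))) (fun ω => ?_)
    rw [abs_of_pos (exp_pos _), exp_le_exp]
    have hb := hbound j ω; rw [Set.mem_Icc] at hb
    calc t * Y j ω ≤ |t * Y j ω| := le_abs_self _
      _ = |t| * |Y j ω| := abs_mul _ _
      _ ≤ |t| * (|u j| + |v j|) := by
          apply mul_le_mul_of_nonneg_left _ (abs_nonneg t)
          rcases abs_cases (Y j ω) with ⟨h1, _⟩ | ⟨h1, _⟩ <;> cases abs_cases (u j) <;>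
            cases abs_cases (v j) <;> linarith
  have hintsum : Integrable (fun ω => exp (t * (∑ j, Y j) ω)) μ :=
    hindep.integrable_exp_mul_sum hmeas (fun j _ => hint j)
  have hchern := measure_ge_le_exp_mul_mgf (X := ∑ j, Y j) (μ := μ) δ htpos.le hintsum
  have hmgf : mgf (∑ j, Y j) μ t ≤ exp (t ^ 2 * S / 8) := by
    rw [hindep.mgf_sum hmeas]
    calc (∏ j, mgf (Y j) μ t) ≤ ∏ j, exp (t ^ 2 * (v j - u j) ^ 2 / 8) :=
          Finset.prod_le_prod (fun j _ => mgf_nonneg)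
            (fun j _ => hoeffding_lemma μ (hmeas j) (hbound j) (hmean j) t)
      _ = exp (∑ j, t ^ 2 * (v j - u j) ^ 2 / 8) := by rw [← Real.exp_sum]
      _ = exp (t ^ 2 * S / 8) := by rw [hS, Finset.mul_sum, Finset.sum_div]
  have hfin : (μ {ω | δ ≤ ∑ j, Y j ω}).toReal ≤ exp (-t * δ) * exp (t ^ 2 * S / 8) := by
    have hset : {ω | δ ≤ (∑ j, Y j) ω} = {ω | δ ≤ ∑ j, Y j ω} := by
      ext ω; simp [Finset.sum_apply]
    calc (μ {ω | δ ≤ ∑ j, Y j ω}).toReal = (μ {ω | δ ≤ (∑ j, Y j) ω}).toReal := by rw [hset]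
      _ ≤ exp (-t * δ) * mgf (∑ j, Y j) μ t := hchern
      _ ≤ exp (-t * δ) * exp (t ^ 2 * S / 8) := by
          apply mul_le_mul_of_nonneg_left hmgf (exp_pos _).le
  calc (μ {ω | δ ≤ ∑ j, Y j ω}).toReal ≤ exp (-t * δ) * exp (t ^ 2 * S / 8) := hfin
    _ = exp (-t * δ + t ^ 2 * S / 8) := by rw [← Real.exp_add]
    _ = exp (-2 * δ ^ 2 / S) := by
        congr 1
        rw [ht]
        field_simp
        ring

lemma scaled_mem_Icc {A cc ll hh : ℝ} (h0 : 0 ≤ hh) (h1 : hh ≤ ll) :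
    A * (hh - cc) ∈ Set.Icc (min (A * (0 - cc)) (A * (ll - cc)))
      (max (A * (0 - cc)) (A * (ll - cc))) := by
  constructor
  · rcases le_total 0 A with hA | hA
    · exact (min_le_left _ _).trans (by nlinarith [mul_nonneg hA h0])
    · exact (min_le_right _ _).trans
        (by nlinarith [mul_nonneg (neg_nonneg.2 hA) (sub_nonneg.2 h1)])
  · rcases le_total 0 A with hA | hA
    · exact le_trans (by nlinarith [mul_nonneg hA (sub_nonneg.2 h1)]) (le_max_right _ _)
    · exact le_trans (by nlinarith [mul_nonneg (neg_nonneg.2 hA) h0]) (le_max_left _ _)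

theorem continuous_signal_recovery {Ω : Type*} [MeasurableSpace Ω]
    (μ : Measure Ω) [IsProbabilityMeasure μ]
    {m n : ℕ} (hm : 0 < m) (W : Matrix (Fin m) (Fin n) ℝ)
    (h : Fin m → Ω → ℝ) (hmeas : ∀ j, Measurable (h j))
    (hindep : iIndepFun h μ)
    (l : Fin m → ℝ) (hl : ∀ j, 0 < l j)
    (hbound : ∀ j ω, h j ω ∈ Set.Icc 0 (l j))
    (p : Fin m → ℝ) (hp : ∀ j, p j ∈ Set.Icc (0 : ℝ) 1)
    (hzero : ∀ j, μ {ω | h j ω = 0} = ENNReal.ofReal (1 - p j))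
    (μc : Fin m → ℝ) (hmean : ∀ j, ∫ ω, h j ω ∂μ = p j * μc j)
    (a : Fin m → Fin m → ℝ)
    (ha : ∀ i j, a i j = (∑ k, W i k * W j k) - if i = j then 1 else 0)
    (b : Fin m → ℝ) (hb : ∀ i, b i = -∑ j, a i j * (p j * μc j))
    (x : Ω → Fin n → ℝ) (hx : ∀ ω, x ω = W.transpose.mulVec (fun j => h j ω))
    (hhat : Fin m → Ω → ℝ)
    (hhat_def : ∀ i ω, hhat i ω = max 0 (∑ k, W i k * x ω k + b i))
    (δ : ℝ) (hδ : 0 ≤ δ) :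
    1 - 2 * ∑ i, Real.exp (-2 * δ ^ 2 / ∑ j, (a i j) ^ 2 * (l j) ^ 2) ≤
      (μ {ω | (1 / m : ℝ) * ∑ i, |hhat i ω - h i ω| ≤ δ}).toReal := by
  classical
  set c : Fin m → ℝ := fun j => p j * μc j with hc
  set z : Fin m → Ω → ℝ := fun i ω => ∑ j, a i j * (h j ω - c j) with hz
  have hzmeas : ∀ i, Measurable (z i) := by
    intro i
    rw [hz]
    apply Finset.measurable_sum
    intro j _
    exact ((hmeas j).sub_const (c j)).const_mul (a i j)
  have hhint : ∀ j, Integrable (h j) μ := by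
    intro j
    refine integrable_of_bddd (hmeas j).aestronglyMeasurable (C := l j) (fun ω => ?_)
    have hB := hbound j ω; rw [Set.mem_Icc] at hB
    rw [abs_le]; constructor <;> linarith [(hl j).le]
  -- per-coordinate tail bound
  have htail : ∀ i, (μ {ω | δ < |z i ω|}).toReal ≤
      2 * Real.exp (-2 * δ ^ 2 / ∑ j, (a i j) ^ 2 * (l j) ^ 2) := by
    intro i
    set Y : Fin m → Ω → ℝ := fun j ω => a i j * (h j ω - c j) with hY
    set Y' : Fin m → Ω → ℝ := fun j ω => (-(a i j)) * (h j ω - c j) with hY'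
    have hYmeas : ∀ j, Measurable (Y j) := fun j => ((hmeas j).sub_const (c j)).const_mul (a i j)
    have hY'meas : ∀ j, Measurable (Y' j) :=
      fun j => ((hmeas j).sub_const (c j)).const_mul (-(a i j))
    have hYindep : iIndepFun Y μ :=
      hindep.comp (fun j => fun y : ℝ => a i j * (y - c j))
        (fun j => (measurable_id.sub_const (c j)).const_mul (a i j))
    have hY'indep : iIndepFun Y' μ :=
      hindep.comp (fun j => fun y : ℝ => (-(a i j)) * (y - c j))
        (fun j => (measurable_id.sub_const (c j)).const_mul (-(a i j)))
    have hYmean : ∀ j, ∫ ω, Y j ω ∂μ = 0 := by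
      intro j
      rw [hY]
      simp only
      rw [MeasureTheory.integral_const_mul,
        integral_sub (hhint j) (integrable_const _), hmean j, integral_const, probReal_univ]
      simp [hc]
    have hY'mean : ∀ j, ∫ ω, Y' j ω ∂μ = 0 := by
      intro j
      rw [hY']
      simp only
      rw [MeasureTheory.integral_const_mul,
        integral_sub (hhint j) (integrable_const _), hmean j, integral_const, probReal_univ]
      simp [hc]
    set u : Fin m → ℝ := fun j => min (a i j * (0 - c j)) (a i j * (l j - c j)) with hu
    set v : Fin m → ℝ := fun j => max (a i j * (0 - c j)) (a i j * (l j - c j)) with hv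
    set u' : Fin m → ℝ := fun j => min ((-(a i j)) * (0 - c j)) ((-(a i j)) * (l j - c j)) with hu'
    set v' : Fin m → ℝ := fun j => max ((-(a i j)) * (0 - c j)) ((-(a i j)) * (l j - c j)) with hv'
    have hYbound : ∀ j ω, Y j ω ∈ Set.Icc (u j) (v j) := by
      intro j ω
      have hB := hbound j ω; rw [Set.mem_Icc] at hB
      simp only [hY, hu, hv]
      exact scaled_mem_Icc hB.1 hB.2
    have hY'bound : ∀ j ω, Y' j ω ∈ Set.Icc (u' j) (v' j) := by
      intro j ω
      have hB := hbound j ω; rw [Set.mem_Icc] at hB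
      simp only [hY', hu', hv']
      exact scaled_mem_Icc hB.1 hB.2
    have hsumeq : ∑ j, (v j - u j) ^ 2 = ∑ j, (a i j) ^ 2 * (l j) ^ 2 := by
      refine Finset.sum_congr rfl (fun j _ => ?_)
      rw [hv, hu]
      simp only
      rw [max_sub_min_eq_abs, sq_abs]
      ring
    have hsumeq' : ∑ j, (v' j - u' j) ^ 2 = ∑ j, (a i j) ^ 2 * (l j) ^ 2 := by
      refine Finset.sum_congr rfl (fun j _ => ?_)
      rw [hv', hu']
      simp only
      rw [max_sub_min_eq_abs, sq_abs]
      ring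
    have h1 := hoeffding_tail μ hYmeas hYindep hYbound hYmean hδ
    have h2 := hoeffding_tail μ hY'meas hY'indep hY'bound hY'mean hδ
    rw [hsumeq] at h1
    rw [hsumeq'] at h2
    have hsplit : {ω | δ < |z i ω|} ⊆ {ω | δ ≤ ∑ j, Y j ω} ∪ {ω | δ ≤ ∑ j, Y' j ω} := by
      intro ω hω
      simp only [Set.mem_setOf_eq] at hω
      simp only [Set.mem_union, Set.mem_setOf_eq]
      have hzY : ∑ j, Y j ω = z i ω := by rw [hY, hz]
      have hzY' : ∑ j, Y' j ω = -(z i ω) := by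
        rw [hY', hz]
        simp only [neg_mul]
        rw [← Finset.sum_neg_distrib]
      rcases abs_cases (z i ω) with ⟨he, _⟩ | ⟨he, _⟩
      · left; rw [hzY]; linarith
      · right; rw [hzY']; linarith
    have hμle : μ {ω | δ < |z i ω|} ≤
        μ {ω | δ ≤ ∑ j, Y j ω} + μ {ω | δ ≤ ∑ j, Y' j ω} :=
      (measure_mono hsplit).trans (measure_union_le _ _)
    calc (μ {ω | δ < |z i ω|}).toReal
        ≤ (μ {ω | δ ≤ ∑ j, Y j ω} + μ {ω | δ ≤ ∑ j, Y' j ω}).toReal :=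
          ENNReal.toReal_mono
            (ENNReal.add_ne_top.2 ⟨measure_ne_top _ _, measure_ne_top _ _⟩) hμle
      _ = (μ {ω | δ ≤ ∑ j, Y j ω}).toReal + (μ {ω | δ ≤ ∑ j, Y' j ω}).toReal :=
          ENNReal.toReal_add (measure_ne_top _ _) (measure_ne_top _ _)
      _ ≤ 2 * Real.exp (-2 * δ ^ 2 / ∑ j, (a i j) ^ 2 * (l j) ^ 2) := by linarith
  -- key identity
  have hiden : ∀ i ω, (∑ k, W i k * x ω k) + b i = h i ω + z i ω := by
    intro i ω
    have hxk : ∀ k, x ω k = ∑ j, W j k * h j ω := by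
      intro k
      rw [hx ω]
      simp [Matrix.mulVec, dotProduct, Matrix.transpose_apply]
    have h1 : (∑ k, W i k * x ω k) = ∑ j, (∑ k, W i k * W j k) * h j ω := by
      simp_rw [hxk, Finset.mul_sum]
      rw [Finset.sum_comm]
      refine Finset.sum_congr rfl (fun j _ => ?_)
      rw [Finset.sum_mul]
      refine Finset.sum_congr rfl (fun k _ => ?_)
      ring
    rw [h1, hb i, hz]
    simp only
    have h2 : ∀ j : Fin m, (∑ k, W i k * W j k) = a i j + if i = j then 1 else 0 := by
      intro j; rw [ha i j]; ring
    simp_rw [h2, add_mul, ite_mul, one_mul, zero_mul, mul_sub]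
    rw [Finset.sum_add_distrib, Finset.sum_ite_eq, if_pos (Finset.mem_univ i),
      Finset.sum_sub_distrib]
    simp only [hc]
    ring
  -- pointwise bound
  have hpt : ∀ i ω, |hhat i ω - h i ω| ≤ |z i ω| := by
    intro i ω
    rw [hhat_def i ω, hiden i ω]
    have hA0 : 0 ≤ h i ω := (hbound i ω).1
    rcases le_total (h i ω + z i ω) 0 with hcs | hcs
    · rw [max_eq_left hcs, zero_sub, abs_neg, abs_of_nonneg hA0]
      linarith [neg_abs_le (z i ω)]
    · rw [max_eq_right hcs, add_sub_cancel_left]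
  -- event inclusion
  set E : Set Ω := ⋂ i, {ω | |z i ω| ≤ δ} with hE
  have hsub : E ⊆ {ω | (1 / m : ℝ) * ∑ i, |hhat i ω - h i ω| ≤ δ} := by
    intro ω hω
    simp only [hE, Set.mem_iInter, Set.mem_setOf_eq] at hω
    simp only [Set.mem_setOf_eq]
    have hm' : (0:ℝ) < m := by exact_mod_cast hm
    have hsum : ∑ i, |hhat i ω - h i ω| ≤ m * δ := by
      calc ∑ i, |hhat i ω - h i ω| ≤ ∑ _i : Fin m, δ :=
            Finset.sum_le_sum (fun i _ => (hpt i ω).trans (hω i))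
        _ = m * δ := by simp [Finset.sum_const, nsmul_eq_mul]
    rw [one_div, inv_mul_le_iff₀ hm']
    linarith [hsum]
  have hEmeas : MeasurableSet E :=
    MeasurableSet.iInter (fun i => measurableSet_le (hzmeas i).abs measurable_const)
  have hcompl : (μ E).toReal + (μ Eᶜ).toReal = 1 := by
    rw [← ENNReal.toReal_add (measure_ne_top μ E) (measure_ne_top μ Eᶜ),
      measure_add_measure_compl hEmeas, measure_univ, ENNReal.toReal_one]
  have hEc : (μ Eᶜ).toReal ≤
      2 * ∑ i, Real.exp (-2 * δ ^ 2 / ∑ j, (a i j) ^ 2 * (l j) ^ 2) := by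
    have h1 : Eᶜ ⊆ ⋃ i, {ω | δ < |z i ω|} := by
      intro ω hω
      simp only [hE, Set.compl_iInter, Set.mem_iUnion, Set.mem_compl_iff,
        Set.mem_setOf_eq] at hω ⊢
      obtain ⟨i, hi⟩ := hω
      exact ⟨i, lt_of_not_ge hi⟩
    have h2 : μ Eᶜ ≤ ∑ i, μ {ω | δ < |z i ω|} :=
      (measure_mono h1).trans (measure_iUnion_fintype_le _ _)
    calc (μ Eᶜ).toReal ≤ (∑ i, μ {ω | δ < |z i ω|}).toReal :=
          ENNReal.toReal_mono (by
            refine (ENNReal.sum_lt_top.2 (fun i _ => ?_)).ne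
            exact measure_lt_top _ _) h2
      _ = ∑ i, (μ {ω | δ < |z i ω|}).toReal :=
          ENNReal.toReal_sum (fun i _ => measure_ne_top _ _)
      _ ≤ ∑ i, 2 * Real.exp (-2 * δ ^ 2 / ∑ j, (a i j) ^ 2 * (l j) ^ 2) :=
          Finset.sum_le_sum (fun i _ => htail i)
      _ = 2 * ∑ i, Real.exp (-2 * δ ^ 2 / ∑ j, (a i j) ^ 2 * (l j) ^ 2) := by
          rw [Finset.mul_sum]
  have hfinal : (μ E).toReal ≤
      (μ {ω | (1 / m : ℝ) * ∑ i, |hhat i ω - h i ω| ≤ δ}).toReal :=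
    ENNReal.toReal_mono (measure_ne_top _ _) (measure_mono hsub)
  linarith
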